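/- Let A be a unital C*-algebra, u a unitary in A, and e an extreme point of the closed unit ball of A with ‖u + e‖ ≤ √2 and ‖u - e‖ ≤ √2. Then there exist projections p, q in A with pq = 0 and p + q = 1 such that e = i(p - q)u. -/

import Mathlib

section Aux

variable {A : Type*} [CStarAlgebra A]

lemma aux_norm_le_one_of_star_mul_self {x : A} (h : ‖star x * x‖ ≤ 1) : ‖x‖ ≤ 1 := by
  have := CStarRing.norm_star_mul_self (x := x)
  nlinarith [norm_nonneg x]

lemma aux_killer [PartialOrder A] [StarOrderedRing A] {y x : A} (hy : 0 ≤ y)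
    (h : star x * y * x = 0) : y * x = 0 := by
  have h1 : CFC.sqrt y * CFC.sqrt y = y := CFC.sqrt_mul_sqrt_self y hy
  have hsa : IsSelfAdjoint (CFC.sqrt y) := IsSelfAdjoint.of_nonneg (CFC.sqrt_nonneg (a := y))
  have h2 : star (CFC.sqrt y * x) * (CFC.sqrt y * x) = 0 := by
    rw [star_mul, hsa.star_eq]
    calc star x * CFC.sqrt y * (CFC.sqrt y * x)
        = star x * (CFC.sqrt y * CFC.sqrt y) * x := by noncomm_ring
      _ = 0 := by rw [h1, h]
  have h3 : CFC.sqrt y * x = 0 := by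
    rwa [CStarRing.star_mul_self_eq_zero_iff] at h2
  calc y * x = CFC.sqrt y * (CFC.sqrt y * x) := by rw [← mul_assoc, h1]
    _ = 0 := by rw [h3, mul_zero]

lemma aux_algebraMap_nonneg [PartialOrder A] [StarOrderedRing A] {c : ℝ} (hc : 0 ≤ c) :
    0 ≤ algebraMap ℝ A c := by
  have : algebraMap ℝ A c = star (Real.sqrt c • (1:A)) * (Real.sqrt c • (1:A)) := by
    simp [star_smul, smul_smul, Real.mul_self_sqrt hc, Algebra.algebraMap_eq_smul_one]
  rw [this]
  exact star_mul_self_nonneg _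

/-- If `e` is an extreme point of the unit ball and `u` is unitary, then no nonzero
symmetric perturbation of `w = e * star u` stays in the unit ball. -/
lemma aux_pinch {u e : A} (hu : u * star u = 1) (hu' : star u * u = 1)
    (he : e ∈ Set.extremePoints ℝ (Metric.closedBall (0 : A) 1))
    {z : A} (hz1 : ‖e * star u + z‖ ≤ 1) (hz2 : ‖e * star u - z‖ ≤ 1) : z = 0 := by
  rcases subsingleton_or_nontrivial A with hA | hA
  · exact Subsingleton.elim _ _
  have hnu : ‖u‖ = 1 := by
    have h := CStarRing.norm_star_mul_self (x := u)
    rw [hu', norm_one] at h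
    nlinarith [norm_nonneg u]
  set w := e * star u with hwdef
  have hx1 : (w + z) * u ∈ Metric.closedBall (0 : A) 1 := by
    rw [Metric.mem_closedBall, dist_zero_right]
    calc ‖(w + z) * u‖ ≤ ‖w + z‖ * ‖u‖ := norm_mul_le _ _
      _ ≤ 1 := by rw [hnu]; simpa using hz1
  have hx2 : (w - z) * u ∈ Metric.closedBall (0 : A) 1 := by
    rw [Metric.mem_closedBall, dist_zero_right]
    calc ‖(w - z) * u‖ ≤ ‖w - z‖ * ‖u‖ := norm_mul_le _ _
      _ ≤ 1 := by rw [hnu]; simpa using hz2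
  have hseg : e ∈ openSegment ℝ ((w + z) * u) ((w - z) * u) := by
    refine ⟨1/2, 1/2, by norm_num, by norm_num, by norm_num, ?_⟩
    have hwu : w * u = e := by
      rw [hwdef, mul_assoc, hu', mul_one]
    rw [← hwu, add_mul, sub_mul]
    module
  have hext := he.2 hx1 hx2 hseg
  have h1 : (w + z) * u = w * u := by
    rw [hext, hwdef, mul_assoc, hu', mul_one]
  have hzu : z * u = 0 := by
    have h2 := sub_eq_zero.mpr h1
    rwa [add_mul, add_sub_cancel_left] at h2
  calc z = z * (u * star u) := by rw [hu, mul_one]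
    _ = (z * u) * star u := by rw [mul_assoc]
    _ = 0 := by rw [hzu, zero_mul]

set_option maxHeartbeats 2000000 in
lemma aux_main [PartialOrder A] [StarOrderedRing A] [Nontrivial A] {w : A} (hwn : ‖w‖ ≤ 1)
    (hext : ∀ z : A, ‖w + z‖ ≤ 1 → ‖w - z‖ ≤ 1 → z = 0)
    (h1w : ‖1 + w‖ ≤ Real.sqrt 2) (h2w : ‖1 - w‖ ≤ Real.sqrt 2) :
    star w = -w ∧ w * w = -1 := by
  set a := star w * w with ha_def
  clear_value a
  have ha_pos : 0 ≤ a := by rw [ha_def]; exact star_mul_self_nonneg w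
  have ha_sa : IsSelfAdjoint a := by rw [ha_def]; exact IsSelfAdjoint.star_mul_self w
  have ha_norm : ‖a‖ ≤ 1 := by
    rw [ha_def, CStarRing.norm_star_mul_self]
    nlinarith [norm_nonneg w]
  have hspec : ∀ t ∈ spectrum ℝ a, 0 ≤ t ∧ t ≤ 1 := by
    intro t ht
    refine ⟨spectrum_nonneg_of_nonneg ha_pos ht, ?_⟩
    have h := spectrum.norm_le_norm_of_mem ht
    rw [Real.norm_eq_abs] at h
    have := le_abs_self t
    linarith
  -- Step B : `a` is a projection and `w * a = w`
  set f₀ : ℝ → ℝ := fun t => (t - t^2) * (1/2) with hf₀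
  set f : A := cfc f₀ a with hf
  clear_value f
  have hf_sa : IsSelfAdjoint f := by rw [hf]; exact cfc_predicate f₀ a
  have hprod : ∀ g : ℝ → ℝ, Continuous g →
      cfc g a * a * cfc g a = cfc (fun t => g t * (t * g t)) a := by
    intro g hg
    conv_rhs => rw [cfc_mul g (fun t => t * g t) a hg.continuousOn (by fun_prop)]
    rw [cfc_mul (fun t : ℝ => t) g a (by fun_prop) hg.continuousOn, cfc_id' ℝ a, mul_assoc]
  have hmp : (1:A) + f = cfc (fun t => 1 + f₀ t) a := by
    rw [cfc_const_add (1:ℝ) f₀ a, map_one, ← hf]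
  have hmm1 : (1:A) - f = cfc (fun t => 1 - f₀ t) a := by
    rw [cfc_sub (fun _ => (1:ℝ)) f₀ a, cfc_const_one ℝ a, ← hf]
  have hkey₁ : star (w + w * f) * (w + w * f)
      = cfc (fun t => (1 + f₀ t) * (t * (1 + f₀ t))) a := by
    have hmsa : star ((1:A) + f) = 1 + f := by rw [star_add, star_one, hf_sa.star_eq]
    have hwf : w * (1 + f) = w + w * f := by rw [mul_add, mul_one]
    calc star (w + w * f) * (w + w * f)
        = star (w * (1 + f)) * (w * (1 + f)) := by rw [hwf]
      _ = star (1 + f) * (star w * w) * (1 + f) := by rw [star_mul]; noncomm_ring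
      _ = cfc (fun t => 1 + f₀ t) a * a * cfc (fun t => 1 + f₀ t) a := by
          rw [hmsa, hmp, ← ha_def]
      _ = _ := hprod _ (by fun_prop)
  have hkey₂ : star (w - w * f) * (w - w * f)
      = cfc (fun t => (1 - f₀ t) * (t * (1 - f₀ t))) a := by
    have hmsa : star ((1:A) - f) = 1 - f := by rw [star_sub, star_one, hf_sa.star_eq]
    have hwf : w * (1 - f) = w - w * f := by rw [mul_sub, mul_one]
    calc star (w - w * f) * (w - w * f)
        = star (w * (1 - f)) * (w * (1 - f)) := by rw [hwf]
      _ = star (1 - f) * (star w * w) * (1 - f) := by rw [star_mul]; noncomm_ring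
      _ = cfc (fun t => 1 - f₀ t) a * a * cfc (fun t => 1 - f₀ t) a := by
          rw [hmsa, hmm1, ← ha_def]
      _ = _ := hprod _ (by fun_prop)
  have hb1 : ‖w + w * f‖ ≤ 1 := by
    apply aux_norm_le_one_of_star_mul_self
    rw [hkey₁]
    apply norm_cfc_le zero_le_one
    intro t ht
    obtain ⟨h0, h1t⟩ := hspec t ht
    have e : (1 + f₀ t) * (t * (1 + f₀ t)) = t * (1 + (t - t^2) * (1/2))^2 := by
      rw [hf₀]; ring
    have hcube : t^3 ≤ 1 := pow_le_one₀ h0 h1t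
    have hfac : 1 - t * (1 + (t - t^2) * (1/2))^2 = (1-t)^2 * (4 + 4*t - t^3) * (1/4) := by ring
    rw [Real.norm_eq_abs, abs_le, e]
    constructor
    · nlinarith [sq_nonneg (1 + (t - t^2) * (1/2))]
    · have h4 : 0 ≤ 4 + 4*t - t^3 := by nlinarith
      have h5 : 0 ≤ (1-t)^2 * (4 + 4*t - t^3) * (1/4) :=
        mul_nonneg (mul_nonneg (sq_nonneg _) h4) (by norm_num)
      linarith
  have hb2 : ‖w - w * f‖ ≤ 1 := by
    apply aux_norm_le_one_of_star_mul_self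
    rw [hkey₂]
    apply norm_cfc_le zero_le_one
    intro t ht
    obtain ⟨h0, h1t⟩ := hspec t ht
    have e : (1 - f₀ t) * (t * (1 - f₀ t)) = t * (1 - (t - t^2) * (1/2))^2 := by
      rw [hf₀]; ring
    rw [Real.norm_eq_abs, abs_le, e]
    constructor
    · nlinarith [sq_nonneg (1 - (t - t^2) * (1/2))]
    · have hx0 : 0 ≤ (t - t^2) * (1/2) := by nlinarith
      have hx2 : (t - t^2) * (1/2) ≤ 2 := by nlinarith
      have hsq : (1 - (t - t^2) * (1/2))^2 ≤ 1 := by nlinarith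
      nlinarith [mul_nonneg h0 (sub_nonneg.mpr hsq),
        mul_nonneg (sub_nonneg.mpr h1t) (sq_nonneg (1 - (t - t^2) * (1/2)))]
  have hfz : w * f = 0 := hext (w * f) hb1 hb2
  have haf0 : a * f = 0 := by rw [ha_def, mul_assoc, hfz, mul_zero]
  have hcfc0 : cfc (fun t : ℝ => t * f₀ t) a = 0 := by
    have h := cfc_mul (fun t : ℝ => t) f₀ a (by fun_prop) (by fun_prop)
    rw [cfc_id' ℝ a] at h
    rw [h, ← hf, haf0]
  have hpt : ∀ t ∈ spectrum ℝ a, t = 0 ∨ t = 1 := by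
    intro t ht
    have hle := norm_apply_le_norm_cfc (fun t : ℝ => t * f₀ t) a ht (by fun_prop) ha_sa
    rw [hcfc0, norm_zero] at hle
    have h00 : t * f₀ t = 0 := by
      have := norm_nonneg (t * f₀ t)
      have : ‖t * f₀ t‖ = 0 := le_antisymm hle this
      exact norm_eq_zero.mp this
    have h01 : t * t * (1 - t) = 0 := by
      rw [hf₀] at h00; nlinarith [h00]
    rcases mul_eq_zero.mp h01 with h | h
    · exact Or.inl (by nlinarith [mul_self_eq_zero.mp h])
    · exact Or.inr (by linarith [sub_eq_zero.mp h])
  have haa : a * a = a := by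
    have h2 : cfc (fun t : ℝ => t * t - t) a = cfc (fun _ : ℝ => (0:ℝ)) a := by
      apply cfc_congr
      intro t ht
      rcases hpt t ht with h | h <;> simp [h]
    have h3 : cfc (fun t : ℝ => t * t - t) a = a * a - a := by
      rw [cfc_sub (fun t : ℝ => t * t) (fun t : ℝ => t) a (by fun_prop) (by fun_prop)]
      rw [cfc_mul (fun t : ℝ => t) (fun t : ℝ => t) a (by fun_prop) (by fun_prop)]
      rw [cfc_id' ℝ a]
    have h4 : cfc (fun _ : ℝ => (0:ℝ)) a = 0 := by
      rw [cfc_const (0:ℝ) a, map_zero]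
    rw [h3, h4] at h2
    rw [sub_eq_zero] at h2
    exact h2
  have hwa : w * a = w := by
    have e1 : star (w * a - w) * (w * a - w)
        = a * (star w * w) * a - a * (star w * w) - (star w * w) * a + star w * w := by
      rw [star_sub, star_mul, ha_sa.star_eq]; noncomm_ring
    rw [← ha_def] at e1
    have e2 : star (w * a - w) * (w * a - w) = 0 := by
      rw [e1, haa, haa]
      abel
    have := CStarRing.star_mul_self_eq_zero_iff (w * a - w) |>.mp e2
    exact sub_eq_zero.mp this
  -- Step C : `b = w * star w` is a projection fixing `w`
  set b : A := w * star w with hb_def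
  clear_value b
  have hb_pos : 0 ≤ b := by rw [hb_def]; exact mul_star_self_nonneg w
  have hb_sa : IsSelfAdjoint b := by rw [hb_def]; exact IsSelfAdjoint.mul_star_self w
  have hbb : b * b = b := by
    have e : b * b = w * a * star w := by rw [hb_def, ha_def]; noncomm_ring
    rw [e, hwa, ← hb_def]
  have hbw : b * w = w := by
    have e : b * w = w * a := by rw [hb_def, ha_def]; noncomm_ring
    rw [e, hwa]
  have hswb : star w * b = star w := by
    calc star w * b = star (b * w) := by rw [star_mul, hb_sa.star_eq]
      _ = star w := by rw [hbw]
  -- Step D : `(1 - b) * (1 - a) = 0`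
  set z₂ : A := (1 - b) * (1 - a) with hz₂def
  clear_value z₂
  have hz₂s : star z₂ = (1 - a) * (1 - b) := by
    rw [hz₂def, star_mul, star_sub, star_sub, star_one, ha_sa.star_eq, hb_sa.star_eq]
  have hcross1 : star w * z₂ = 0 := by
    have e : star w * ((1 - b) * (1 - a)) = (star w - star w * b) * (1 - a) := by noncomm_ring
    rw [hz₂def, e, hswb, sub_self, zero_mul]
  have hcross2 : star z₂ * w = 0 := by
    rw [hz₂s]
    have e : (1 - a) * (1 - b) * w = (1 - a) * (w - b * w) := by noncomm_ring
    rw [e, hbw, sub_self, mul_zero]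
  have hkeyp : star (w + z₂) * (w + z₂) = a + star z₂ * z₂ := by
    have e : (star w + star z₂) * (w + z₂)
        = star w * w + star w * z₂ + star z₂ * w + star z₂ * z₂ := by noncomm_ring
    rw [star_add, e, hcross1, hcross2, ← ha_def]
    abel
  have hkeym : star (w - z₂) * (w - z₂) = a + star z₂ * z₂ := by
    have e : (star w - star z₂) * (w - z₂)
        = star w * w - star w * z₂ - star z₂ * w + star z₂ * z₂ := by noncomm_ring
    rw [star_sub, e, hcross1, hcross2, ← ha_def]
    abel
  have h1b : ((1:A) - b) * (1 - b) = 1 - b := by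
    have e : ((1:A) - b) * (1 - b) = 1 - b - b + b * b := by noncomm_ring
    rw [e, hbb]; abel
  have hzz : star z₂ * z₂ = (1 - a) * (1 - b) * (1 - a) := by
    rw [hz₂s, hz₂def]
    calc (1 - a) * (1 - b) * ((1 - b) * (1 - a))
        = (1 - a) * (((1 - b) * (1 - b)) * (1 - a)) := by noncomm_ring
      _ = (1 - a) * ((1 - b) * (1 - a)) := by rw [h1b]
      _ = (1 - a) * (1 - b) * (1 - a) := by rw [mul_assoc]
  have hle1 : a + star z₂ * z₂ ≤ 1 := by
    have hb1 : (1:A) - b ≤ 1 := sub_le_self _ hb_pos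
    have conj := star_left_conjugate_le_conjugate hb1 (1 - a)
    rw [star_sub, star_one, ha_sa.star_eq] at conj
    have e2 : ((1:A) - a) * 1 * (1 - a) = 1 - a := by
      have e : ((1:A) - a) * 1 * (1 - a) = 1 - a - a + a * a := by noncomm_ring
      rw [e, haa]; abel
    rw [e2] at conj
    calc a + star z₂ * z₂ = a + (1 - a) * (1 - b) * (1 - a) := by rw [hzz]
      _ ≤ a + (1 - a) := add_le_add_right conj a
      _ = 1 := by abel
  have hs_pos : 0 ≤ a + star z₂ * z₂ := add_nonneg ha_pos (star_mul_self_nonneg z₂)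
  have hnp : ‖w + z₂‖ ≤ 1 := by
    apply aux_norm_le_one_of_star_mul_self
    rw [hkeyp]
    exact (CStarAlgebra.norm_le_one_iff_of_nonneg _ hs_pos).mpr hle1
  have hnm : ‖w - z₂‖ ≤ 1 := by
    apply aux_norm_le_one_of_star_mul_self
    rw [hkeym]
    exact (CStarAlgebra.norm_le_one_iff_of_nonneg _ hs_pos).mpr hle1
  have hz₂0 : z₂ = 0 := hext z₂ hnp hnm
  have hone : (1:A) = a + b - b * a := by
    have e : ((1:A) - b) * (1 - a) = 1 - (a + b - b * a) := by noncomm_ring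
    rw [hz₂def, e] at hz₂0
    exact sub_eq_zero.mp hz₂0
  -- Step E : the norm conditions force `w + star w = 0`
  set h : A := w + star w with hh_def
  clear_value h
  have hyle : ∀ y : A, IsSelfAdjoint y → ‖y‖ ≤ 2 → y ≤ 2 := by
    intro y hy hyn
    calc y ≤ algebraMap ℝ A ‖y‖ := hy.le_algebraMap_norm_self
      _ ≤ algebraMap ℝ A 2 := by
          have h0 := aux_algebraMap_nonneg (A := A) (sub_nonneg.mpr hyn)
          rw [map_sub] at h0
          exact sub_nonneg.mp h0
      _ = 2 := by
          rw [map_ofNat]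
  have hsqle : ∀ x : A, ‖x‖ ≤ Real.sqrt 2 → ‖star x * x‖ ≤ 2 := by
    intro x hx
    rw [CStarRing.norm_star_mul_self]
    nlinarith [norm_nonneg x, Real.sqrt_nonneg 2, Real.mul_self_sqrt (by norm_num : (0:ℝ) ≤ 2)]
  have hsqle' : ∀ x : A, ‖x‖ ≤ Real.sqrt 2 → ‖x * star x‖ ≤ 2 := by
    intro x hx
    rw [CStarRing.norm_self_mul_star]
    nlinarith [norm_nonneg x, Real.sqrt_nonneg 2, Real.mul_self_sqrt (by norm_num : (0:ℝ) ≤ 2)]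
  have P1 : (0:A) ≤ 1 - a - h := by
    have hy := hyle _ (IsSelfAdjoint.star_mul_self (1 + w)) (hsqle _ h1w)
    have e : (2:A) - star (1 + w) * (1 + w) = 1 - a - h := by
      rw [star_add, star_one, ha_def, hh_def, ← one_add_one_eq_two]; noncomm_ring
    rw [← e]
    exact sub_nonneg.mpr hy
  have P2 : (0:A) ≤ 1 - a + h := by
    have hy := hyle _ (IsSelfAdjoint.star_mul_self (1 - w)) (hsqle _ h2w)
    have e : (2:A) - star (1 - w) * (1 - w) = 1 - a + h := by
      rw [star_sub, star_one, ha_def, hh_def, ← one_add_one_eq_two]; noncomm_ring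
    rw [← e]
    exact sub_nonneg.mpr hy
  have P3 : (0:A) ≤ 1 - b - h := by
    have hy := hyle _ (IsSelfAdjoint.mul_star_self (1 + w)) (hsqle' _ h1w)
    have e : (2:A) - (1 + w) * star (1 + w) = 1 - b - h := by
      rw [star_add, star_one, hb_def, hh_def, ← one_add_one_eq_two]; noncomm_ring
    rw [← e]
    exact sub_nonneg.mpr hy
  have P4 : (0:A) ≤ 1 - b + h := by
    have hy := hyle _ (IsSelfAdjoint.mul_star_self (1 - w)) (hsqle' _ h2w)
    have e : (2:A) - (1 - w) * star (1 - w) = 1 - b + h := by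
      rw [star_sub, star_one, hb_def, hh_def, ← one_add_one_eq_two]; noncomm_ring
    rw [← e]
    exact sub_nonneg.mpr hy
  have haha : a * h * a = 0 := by
    have n1 : 0 ≤ a * (1 - a - h) * a := by
      have := star_left_conjugate_nonneg P1 a
      rwa [ha_sa.star_eq] at this
    have n2 : 0 ≤ a * (1 - a + h) * a := by
      have := star_left_conjugate_nonneg P2 a
      rwa [ha_sa.star_eq] at this
    have e1 : a * (1 - a - h) * a = -(a * h * a) := by
      have e : a * (1 - a - h) * a = a * a - a * a * a - a * h * a := by noncomm_ring
      rw [e, haa, haa]; abel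
    have e2 : a * (1 - a + h) * a = a * h * a := by
      have e : a * (1 - a + h) * a = a * a - a * a * a + a * h * a := by noncomm_ring
      rw [e, haa, haa]; abel
    rw [e1] at n1
    rw [e2] at n2
    exact le_antisymm (neg_nonneg.mp n1) n2
  have hbhb : b * h * b = 0 := by
    have n1 : 0 ≤ b * (1 - b - h) * b := by
      have := star_left_conjugate_nonneg P3 b
      rwa [hb_sa.star_eq] at this
    have n2 : 0 ≤ b * (1 - b + h) * b := by
      have := star_left_conjugate_nonneg P4 b
      rwa [hb_sa.star_eq] at this
    have e1 : b * (1 - b - h) * b = -(b * h * b) := by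
      have e : b * (1 - b - h) * b = b * b - b * b * b - b * h * b := by noncomm_ring
      rw [e, hbb, hbb]; abel
    have e2 : b * (1 - b + h) * b = b * h * b := by
      have e : b * (1 - b + h) * b = b * b - b * b * b + b * h * b := by noncomm_ring
      rw [e, hbb, hbb]; abel
    rw [e1] at n1
    rw [e2] at n2
    exact le_antisymm (neg_nonneg.mp n1) n2
  have hha : h * a = 0 := by
    have hk : (1 - a - h) * a = 0 := by
      apply aux_killer P1
      rw [ha_sa.star_eq]
      have e : a * (1 - a - h) * a = a * a - a * a * a - a * h * a := by noncomm_ring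
      rw [e, haa, haa, haha]
      abel
    have e : (1 - a - h) * a = a - a * a - h * a := by noncomm_ring
    rw [e, haa] at hk
    have : -(h * a) = 0 := by rw [← hk]; abel
    exact neg_eq_zero.mp this
  have hhb : h * b = 0 := by
    have hk : (1 - b - h) * b = 0 := by
      apply aux_killer P3
      rw [hb_sa.star_eq]
      have e : b * (1 - b - h) * b = b * b - b * b * b - b * h * b := by noncomm_ring
      rw [e, hbb, hbb, hbhb]
      abel
    have e : (1 - b - h) * b = b - b * b - h * b := by noncomm_ring
    rw [e, hbb] at hk
    have : -(h * b) = 0 := by rw [← hk]; abel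
    exact neg_eq_zero.mp this
  have h0 : h = 0 := by
    calc h = h * 1 := (mul_one h).symm
      _ = h * (a + b - b * a) := by rw [← hone]
      _ = h * a + h * b - h * b * a := by noncomm_ring
      _ = 0 := by rw [hha, hhb]; simp
  -- Step F : conclude
  have hstar : star w = -w := by
    have hw0 : w + star w = 0 := by rw [← hh_def]; exact h0
    exact eq_neg_of_add_eq_zero_right hw0
  have hba : b = a := by
    rw [hb_def, ha_def, hstar]
    simp [mul_neg, neg_mul]
  have ha1 : a = 1 := by
    have h2 := hone
    rw [hba, haa] at h2
    have h3 : (1:A) = a := by rw [h2]; abel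
    exact h3.symm
  have hww : w * w = -1 := by
    have h2 : a = -(w * w) := by rw [ha_def, hstar]; simp [neg_mul]
    rw [ha1] at h2
    exact neg_eq_iff_eq_neg.mp h2.symm
  exact ⟨hstar, hww⟩

end Aux

lemma aux_build {A : Type*} [CStarAlgebra A] {s : A} (hs : star s = s) (hs2 : s * s = 1) :
    ∃ p q : A, star p = p ∧ p * p = p ∧ star q = q ∧ q * q = q ∧
      p * q = 0 ∧ p + q = 1 ∧ p - q = s := by
  have hsmul : ∀ (c d : ℂ) (x y : A), (c • x) * (d • y) = (c * d) • (x * y) := by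
    intro c d x y
    rw [smul_mul_assoc, mul_smul_comm, smul_smul]
  refine ⟨(2:ℂ)⁻¹ • (1 + s), (2:ℂ)⁻¹ • (1 - s), ?_, ?_, ?_, ?_, ?_, ?_, ?_⟩
  · rw [star_smul, star_add, star_one, hs]
    congr 1
    simp
  · have key : ((1:A) + s) * (1 + s) = (2:ℂ) • (1 + s) := by
      have e : ((1:A) + s) * (1 + s) = 1 + s + s + s * s := by noncomm_ring
      rw [e, hs2]
      module
    rw [hsmul, key, smul_smul]
    norm_num
  · rw [star_smul, star_sub, star_one, hs]
    congr 1
    simp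
  · have key : ((1:A) - s) * (1 - s) = (2:ℂ) • (1 - s) := by
      have e : ((1:A) - s) * (1 - s) = 1 - s - s + s * s := by noncomm_ring
      rw [e, hs2]
      module
    rw [hsmul, key, smul_smul]
    norm_num
  · have key : ((1:A) + s) * (1 - s) = 0 := by
      have e : ((1:A) + s) * (1 - s) = 1 + s - s - s * s := by noncomm_ring
      rw [e, hs2]
      abel
    rw [hsmul, key, smul_zero]
  · have key : ((1:A) + s) + (1 - s) = (2:ℂ) • 1 := by module
    rw [← smul_add, key, smul_smul]
    norm_num
  · have key : ((1:A) + s) - (1 - s) = (2:ℂ) • s := by module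
    rw [← smul_sub, key, smul_smul]
    norm_num

theorem stmt_10 {A : Type*} [CStarAlgebra A]
    (u : A) (hu : u * star u = 1) (hu' : star u * u = 1)
    (e : A) (he : e ∈ Set.extremePoints ℝ (Metric.closedBall (0 : A) 1))
    (h1 : ‖u + e‖ ≤ Real.sqrt 2) (h2 : ‖u - e‖ ≤ Real.sqrt 2) :
    ∃ p q : A, star p = p ∧ p * p = p ∧ star q = q ∧ q * q = q ∧
      p * q = 0 ∧ p + q = 1 ∧ e = Complex.I • ((p - q) * u) := by
  rcases subsingleton_or_nontrivial A with hA | hA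
  · exact ⟨1, 0, Subsingleton.elim _ _, Subsingleton.elim _ _, Subsingleton.elim _ _,
      Subsingleton.elim _ _, Subsingleton.elim _ _, Subsingleton.elim _ _, Subsingleton.elim _ _⟩
  letI : PartialOrder A := CStarAlgebra.spectralOrder A
  letI : StarOrderedRing A := CStarAlgebra.spectralOrderedRing A
  have hnu : ‖u‖ = 1 := by
    have h := CStarRing.norm_star_mul_self (x := u)
    rw [hu', norm_one] at h
    nlinarith [norm_nonneg u]
  have he1 : ‖e‖ ≤ 1 := by
    have := he.1
    rwa [Metric.mem_closedBall, dist_zero_right] at this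
  have hwn : ‖e * star u‖ ≤ 1 := by
    calc ‖e * star u‖ ≤ ‖e‖ * ‖star u‖ := norm_mul_le _ _
      _ ≤ 1 := by rw [norm_star, hnu, mul_one]; exact he1
  have hext : ∀ z : A, ‖e * star u + z‖ ≤ 1 → ‖e * star u - z‖ ≤ 1 → z = 0 :=
    fun z hz1 hz2 => aux_pinch hu hu' he hz1 hz2
  have h1w : ‖1 + e * star u‖ ≤ Real.sqrt 2 := by
    have e1 : (1:A) + e * star u = (u + e) * star u := by rw [add_mul, hu]
    rw [e1]
    calc ‖(u + e) * star u‖ ≤ ‖u + e‖ * ‖star u‖ := norm_mul_le _ _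
      _ ≤ Real.sqrt 2 := by rw [norm_star, hnu, mul_one]; exact h1
  have h2w : ‖1 - e * star u‖ ≤ Real.sqrt 2 := by
    have e1 : (1:A) - e * star u = (u - e) * star u := by rw [sub_mul, hu]
    rw [e1]
    calc ‖(u - e) * star u‖ ≤ ‖u - e‖ * ‖star u‖ := norm_mul_le _ _
      _ ≤ Real.sqrt 2 := by rw [norm_star, hnu, mul_one]; exact h2
  obtain ⟨hstar, hww⟩ := aux_main hwn hext h1w h2w
  set w : A := e * star u with hw_def
  have hs : star ((-Complex.I) • w) = (-Complex.I) • w := by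
    rw [star_smul, hstar]
    simp [smul_neg, neg_smul]
  have hs2 : ((-Complex.I) • w) * ((-Complex.I) • w) = 1 := by
    rw [smul_mul_assoc, mul_smul_comm, smul_smul, hww]
    simp [Complex.I_mul_I]
  obtain ⟨p, q, hp1, hp2, hq1, hq2, hpq, hpq1, hpqs⟩ := aux_build hs hs2
  refine ⟨p, q, hp1, hp2, hq1, hq2, hpq, hpq1, ?_⟩
  rw [hpqs, smul_mul_assoc, smul_smul]
  have hwu : w * u = e := by rw [hw_def, mul_assoc, hu', mul_one]
  rw [hwu]
  simp [Complex.I_mul_I]
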